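/- Let ε ∈ (0, 1/2), η = 2ε/(1−ε), m > 0, Q₀ ∈ (0,1), and d̂, ŵ > 0 satisfy: d̂ = (m/2)·Q₀(1 + ε(4Q₀ − 1))/(1 − Q₀), 1/ŵ = 3/((1−ε)m) − (2(1+η)/m)·(1 − Q₀)/(1 + ε(4Q₀ − 1)), and Q₀ = d̂/ŵ. Then Q₀ = 1/4, d̂ = m/6 and ŵ = 2m/3. -/

import Mathlib

theorem stmt_10 (ε η m Q₀ dh wh : ℝ)
    (hε : 0 < ε) (hε1 : ε < 1/2) (hη : η = 2*ε/(1-ε))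
    (hm : 0 < m) (hQ0 : 0 < Q₀) (hQ1 : Q₀ < 1) (hdh : 0 < dh) (hwh : 0 < wh)
    (h1 : dh = m/2 * (Q₀*(1 + ε*(4*Q₀ - 1))/(1 - Q₀)))
    (h2 : 1/wh = 3/((1-ε)*m) - 2*(1+η)/m * ((1 - Q₀)/(1 + ε*(4*Q₀ - 1))))
    (h3 : Q₀ = dh/wh) :
    Q₀ = 1/4 ∧ dh = m/6 ∧ wh = 2*m/3 := by
  have hA : 0 < 1 + ε*(4*Q₀ - 1) := by nlinarith
  have h1Q : 0 < 1 - Q₀ := by linarith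
  have h1e : 0 < 1 - ε := by linarith
  subst hη
  have h3' : dh = Q₀ * wh := by
    field_simp at h3; linarith
  field_simp at h1 h2
  have hmA : 0 < m * (1 + ε*(4*Q₀ - 1)) := mul_pos hm hA
  have hme : (0:ℝ) < (1-ε)*m := mul_pos h1e hm
  have hw : wh * (2 * (1 - Q₀)) = m * (1 + ε*(4*Q₀ - 1)) :=
    mul_left_cancel₀ (ne_of_gt hQ0) (by linear_combination h1 - (2*(1-Q₀)) * h3')
  have e1 : (1-ε)*m*(1 + ε*(4*Q₀ - 1)) =
      (3*(1 + ε*(4*Q₀ - 1)) - 2*(1+ε)*(1-Q₀))*wh :=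
    mul_left_cancel₀ (ne_of_gt hme) (by linear_combination ((1-ε)*m*(1 + ε*(4*Q₀ - 1))) * h2 - ((1-ε)*m*2*wh*(1-Q₀)*(1+ε)) * mul_inv_cancel₀ (ne_of_gt hA))
  have hkey : (4*Q₀ - 1) * (1 + 3*ε) = 0 :=
    mul_left_cancel₀ (ne_of_gt hmA) (by
      linear_combination (-(2*(1-Q₀))) * e1 - (3*(1 + ε*(4*Q₀ - 1)) - 2*(1+ε)*(1-Q₀)) * hw)
  have hQ : Q₀ = 1/4 := by
    have h5 : 0 < 1 + 3*ε := by linarith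
    rcases mul_eq_zero.mp hkey with h | h
    · linarith
    · linarith
  subst hQ
  refine ⟨rfl, ?_, ?_⟩
  · nlinarith
  · nlinarith
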